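/- If z = Qψ exactly (consistent frames), then the true probe w satisfies A w = D w, i.e., w is an eigenvector of D^{-1}A with eigenvalue 1, where D = diag(S*(T T*|z|²)) and A = S* diag(z) T T* diag(z̄) S (assuming all diagonal entries of D are positive). -/

import Mathlib

open Matrix BigOperators

noncomputable section

/-- Restriction matrix extracting the first `m` coordinates of `ℂ^n`. -/
def restrictM (m n : ℕ) : Matrix (Fin m) (Fin n) ℂ :=
  Matrix.of fun i j => if (i : ℕ) = (j : ℕ) then 1 else 0

/-- Permutation matrix of `σ` acting on `ℂ^n`. -/
def permM {n : ℕ} (σ : Equiv.Perm (Fin n)) : Matrix (Fin n) (Fin n) ℂ :=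
  Matrix.of fun i j => if σ j = i then 1 else 0

/-- K-fold stacking matrix: K copies of the identity stacked vertically. -/
def stackM (K m : ℕ) : Matrix (Fin K × Fin m) (Fin m) ℂ :=
  Matrix.of fun p j => if p.2 = j then 1 else 0

/-- Stacked frame-extraction matrix with blocks `T_i = R C_i`. -/
def Tstack (K m n : ℕ) (σ : Fin K → Equiv.Perm (Fin n)) :
    Matrix (Fin K × Fin m) (Fin n) ℂ :=
  Matrix.of fun p j => (restrictM m n * permM (σ p.1)) p.2 j
lemma Tstack_apply {K m n : ℕ} (hmn : m ≤ n) (σ : Fin K → Equiv.Perm (Fin n))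
    (p : Fin K × Fin m) (j : Fin n) :
    Tstack K m n σ p j = if j = (σ p.1)⁻¹ (Fin.castLE hmn p.2) then 1 else 0 := by
  simp only [Tstack, Matrix.of_apply, Matrix.mul_apply, restrictM, permM]
  rw [Finset.sum_eq_single ((σ p.1) j)]
  · have : ((p.2 : ℕ) = ((σ p.1) j : ℕ)) ↔ (j = (σ p.1)⁻¹ (Fin.castLE hmn p.2)) := by
      rw [eq_comm]
      have h1 : ((σ p.1) j : ℕ) = (p.2 : ℕ) ↔ (σ p.1) j = Fin.castLE hmn p.2 := by
        rw [Fin.ext_iff]; simp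
      rw [h1, Equiv.Perm.inv_def, Equiv.apply_eq_iff_eq_symm_apply]
    simp [this]
  · intro b _ hb
    simp [hb, Ne.symm hb]
  · simp

lemma stackM_mulVec {K m : ℕ} (w : Fin m → ℂ) (p : Fin K × Fin m) :
    (stackM K m).mulVec w p = w p.2 := by
  simp [stackM, Matrix.mulVec, dotProduct]

lemma stackM_conjT_mulVec {K m : ℕ} (v : Fin K × Fin m → ℂ) (j : Fin m) :
    (stackM K m)ᴴ.mulVec v j = ∑ k : Fin K, v (k, j) := by
  simp [stackM, Matrix.mulVec, dotProduct, Matrix.conjTranspose_apply, Fintype.sum_prod_type]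

lemma norm_sq_c (a : ℂ) : ((‖a‖ : ℂ))^2 = a * star a := by
  rw [show ((‖a‖:ℂ))^2 = ((‖a‖^2 : ℝ) : ℂ) by push_cast; ring]
  simp [Complex.sq_norm, Complex.mul_conj, RCLike.star_def]

open scoped ComplexOrder

theorem stmt15 {K m n : ℕ} (hmn : m ≤ n) (σ : Fin K → Equiv.Perm (Fin n))
    (w : Fin m → ℂ) (ψ : Fin n → ℂ) (z : Fin K × Fin m → ℂ)
    (hz : z = (Matrix.diagonal ((stackM K m).mulVec w) * Tstack K m n σ).mulVec ψ)
    (D A : Matrix (Fin m) (Fin m) ℂ)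
    (hD : D = Matrix.diagonal ((stackM K m)ᴴ.mulVec ((Tstack K m n σ).mulVec
        ((Tstack K m n σ)ᴴ.mulVec (fun p => (‖z p‖ : ℂ) ^ 2)))))
    (hA : A = (stackM K m)ᴴ * Matrix.diagonal z * Tstack K m n σ * (Tstack K m n σ)ᴴ *
        Matrix.diagonal (star z) * stackM K m)
    (hpos : ∀ k, 0 < ((stackM K m)ᴴ.mulVec ((Tstack K m n σ).mulVec
        ((Tstack K m n σ)ᴴ.mulVec (fun p => (‖z p‖ : ℂ) ^ 2)))) k) :
    A.mulVec w = D.mulVec w := by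
  set F : Fin K × Fin m → Fin n := fun p => (σ p.1)⁻¹ (Fin.castLE hmn p.2) with hF
  have hTv : ∀ (v : Fin n → ℂ) p, (Tstack K m n σ).mulVec v p = v (F p) := by
    intro v p
    simp [Matrix.mulVec, dotProduct, Tstack_apply hmn, hF]
  have hThv : ∀ (v : Fin K × Fin m → ℂ) (j : Fin n),
      (Tstack K m n σ)ᴴ.mulVec v j = ∑ q, (if j = F q then v q else 0) := by
    intro v j
    simp [Matrix.mulVec, dotProduct, Matrix.conjTranspose_apply, Tstack_apply hmn, hF,
      apply_ite (starRingEnd ℂ), ite_mul]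
  have hzp : ∀ p, z p = w p.2 * ψ (F p) := by
    intro p
    rw [hz, ← Matrix.mulVec_mulVec, Matrix.mulVec_diagonal, hTv, stackM_mulVec]
  ext j
  rw [hA, hD]
  rw [← Matrix.mulVec_mulVec, ← Matrix.mulVec_mulVec, ← Matrix.mulVec_mulVec,
    ← Matrix.mulVec_mulVec, ← Matrix.mulVec_mulVec]
  rw [Matrix.mulVec_diagonal]
  rw [stackM_conjT_mulVec, stackM_conjT_mulVec]
  simp only [Matrix.mulVec_diagonal, hTv, hThv, stackM_mulVec, Pi.star_apply]
  rw [Finset.sum_mul]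
  apply Finset.sum_congr rfl
  intro k _
  rw [Finset.mul_sum, Finset.sum_mul]
  apply Finset.sum_congr rfl
  intro q _
  by_cases h : F (k, j) = F q
  · rw [if_pos h, if_pos h, norm_sq_c, hzp (k, j), hzp q, h]
    simp only [StarMul.star_mul]
    ring
  · simp [h]
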